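/- Fix p₀₁, p₁₀ ∈ (0,1) with p₀₁ + p₁₀ ≤ 1 and p₀₁ ≥ (1−p₁₀)²/(2−p₁₀). Set h₃ = (1−p₁₀)·(p₁₀ + (p₁₀+p₀₁)(1−p₁₀)). Then the rate region Λ_s(p₀₁, p₁₀) equals the set of all pairs (r₁, r₂) with r₁ ≥ 0 and r₂ ≥ 0 satisfying: p₀₁·r₁ + h₃·r₂ ≤ h₃·p₀₁/(p₁₀+p₀₁); r₁ + r₂ ≤ 1 − p₁₀²/(p₁₀+p₀₁)² − p₁₀p₀₁/(p₀₁+p₁₀); h₃·r₁ + p₀₁·r₂ ≤ h₃·p₀₁/(p₁₀+p₀₁). -/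

import Mathlib

set_option maxHeartbeats 4000000


open Finset

/-- State of the Gilbert–Elliot two-queue model:
`(m, c₁, c₂)` where `m = true` means the server is at queue 1,
and `cᵢ = true` means channel `i` is ON. -/
abbrev GEState : Type := Bool × Bool × Bool

/-- One-step channel transition for the (possibly non-symmetric) Gilbert–Elliot channel:
from ON the channel moves to OFF with probability `p₁₀`, from OFF it moves to ON with
probability `p₀₁`. -/
noncomputable def chTrans (p01 p10 : ℝ) (c c' : Bool) : ℝ :=
  if c then (if c' then 1 - p10 else p10) else (if c' then p01 else 1 - p01)

/-- Transition probability of going to state `s'` from state `s` under action `a`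
(`a = true` means "stay", `a = false` means "switch"). -/
noncomputable def GEP (p01 p10 : ℝ) (s' s : GEState) (a : Bool) : ℝ :=
  (if s'.1 = (if a then s.1 else !s.1) then (1 : ℝ) else 0) *
    chTrans p01 p10 s.2.1 s'.2.1 * chTrans p01 p10 s.2.2 s'.2.2

/-- The state-action polytope `X(p₀₁, p₁₀)`. -/
def GEX (p01 p10 : ℝ) : Set (GEState × Bool → ℝ) :=
  {x | (∀ sa, 0 ≤ x sa) ∧ (∑ sa : GEState × Bool, x sa) = 1 ∧
    ∀ s : GEState, (∑ a : Bool, x (s, a)) =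
      ∑ s' : GEState, ∑ a : Bool, GEP p01 p10 s s' a * x (s', a)}

/-- Rate of queue 1: frequency of staying at queue 1 with channel 1 ON. -/
noncomputable def GErate1 (x : GEState × Bool → ℝ) : ℝ :=
  x ((true, true, true), true) + x ((true, true, false), true)

/-- Rate of queue 2: frequency of staying at queue 2 with channel 2 ON. -/
noncomputable def GErate2 (x : GEState × Bool → ℝ) : ℝ :=
  x ((false, true, true), true) + x ((false, false, true), true)

/-- The rate region `Λ_s(p₀₁, p₁₀)`. -/
def GERateRegion (p01 p10 : ℝ) : Set (ℝ × ℝ) :=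
  {r | ∃ x ∈ GEX p01 p10, r = (GErate1 x, GErate2 x)}

lemma geAux_comb {p01 p10 : ℝ} {x y z : GEState × Bool → ℝ}
    (hx : x ∈ GEX p01 p10) (hy : y ∈ GEX p01 p10) (hz : z ∈ GEX p01 p10)
    {a b c : ℝ} (ha : 0 ≤ a) (hb : 0 ≤ b) (hc : 0 ≤ c) (habc : a + b + c = 1) :
    (fun sa => a * x sa + b * y sa + c * z sa) ∈ GEX p01 p10 := by
  obtain ⟨hx1, hx2, hx3⟩ := hx
  obtain ⟨hy1, hy2, hy3⟩ := hy
  obtain ⟨hz1, hz2, hz3⟩ := hz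
  refine ⟨fun sa => by have := hx1 sa; have := hy1 sa; have := hz1 sa; positivity, ?_, ?_⟩
  · simp only [Fintype.sum_prod_type, Fintype.sum_bool] at hx2 hy2 hz2 ⊢
    linear_combination a * hx2 + b * hy2 + c * hz2 + habc
  · intro s
    have Hx := hx3 s; have Hy := hy3 s; have Hz := hz3 s
    simp only [Fintype.sum_prod_type, Fintype.sum_bool] at Hx Hy Hz ⊢
    linear_combination a * Hx + b * Hy + c * Hz

lemma geBarySide (h3 p pi1 v1 v2 r1 r2 : ℝ) (hh3 : 0 < h3) (hpi1 : 0 < pi1) (hv2 : 0 < v2)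
    (hI : h3 * v1 + p * v2 = h3 * pi1) (h2 : 0 ≤ r2) (hc : r2 * v1 ≤ r1 * v2)
    (hC : h3 * r1 + p * r2 ≤ h3 * pi1) :
    ∃ al be ga : ℝ, 0 ≤ al ∧ 0 ≤ be ∧ 0 ≤ ga ∧ ga + al + be = 1 ∧
      al * pi1 + be * v1 = r1 ∧ be * v2 = r2 := by
  have hpv : 0 < pi1 * v2 := mul_pos hpi1 hv2
  refine ⟨(r1 * v2 - r2 * v1) / (pi1 * v2), r2 / v2,
    1 - (r1 * v2 - r2 * v1) / (pi1 * v2) - r2 / v2,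
    div_nonneg (by linarith) hpv.le, div_nonneg h2 hv2.le, ?_, by ring, ?_, ?_⟩
  · have key : h3 * (pi1 * v2 - r1 * v2 + r2 * v1 - r2 * pi1)
        = v2 * (h3 * pi1 - (h3 * r1 + p * r2)) := by linear_combination r2 * hI
    have pos : 0 ≤ h3 * (pi1 * v2 - r1 * v2 + r2 * v1 - r2 * pi1) := by
      rw [key]; exact mul_nonneg hv2.le (by linarith)
    have pos2 : 0 ≤ pi1 * v2 - r1 * v2 + r2 * v1 - r2 * pi1 := by nlinarith
    have e : 1 - (r1 * v2 - r2 * v1) / (pi1 * v2) - r2 / v2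
        = (pi1 * v2 - r1 * v2 + r2 * v1 - r2 * pi1) / (pi1 * v2) := by
      field_simp; ring
    rw [e]; exact div_nonneg pos2 hpv.le
  · field_simp; ring
  · field_simp

lemma geBaryMid (B v1 v2 r1 r2 : ℝ) (hv2 : 0 < v2) (hvv : v2 < v1) (hI : v1 + v2 = B)
    (hc1 : r1 * v2 ≤ r2 * v1) (hc2 : r2 * v2 ≤ r1 * v1) (hB : r1 + r2 ≤ B) :
    ∃ al be ga : ℝ, 0 ≤ al ∧ 0 ≤ be ∧ 0 ≤ ga ∧ ga + al + be = 1 ∧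
      al * v1 + be * v2 = r1 ∧ al * v2 + be * v1 = r2 := by
  have hD : 0 < v1 ^ 2 - v2 ^ 2 := by nlinarith
  refine ⟨(r1 * v1 - r2 * v2) / (v1 ^ 2 - v2 ^ 2), (r2 * v1 - r1 * v2) / (v1 ^ 2 - v2 ^ 2),
    1 - (r1 * v1 - r2 * v2) / (v1 ^ 2 - v2 ^ 2) - (r2 * v1 - r1 * v2) / (v1 ^ 2 - v2 ^ 2),
    div_nonneg (by linarith) hD.le, div_nonneg (by linarith) hD.le, ?_, by ring, ?_, ?_⟩
  · have e : 1 - (r1 * v1 - r2 * v2) / (v1 ^ 2 - v2 ^ 2) - (r2 * v1 - r1 * v2) / (v1 ^ 2 - v2 ^ 2)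
        = ((v1 - v2) * (v1 + v2 - r1 - r2)) / (v1 ^ 2 - v2 ^ 2) := by
      field_simp; ring
    rw [e]
    exact div_nonneg (mul_nonneg (by linarith) (by linarith)) hD.le
  · field_simp; ring
  · field_simp; ring

noncomputable def geXO (p01 p10 : ℝ) : GEState × Bool → ℝ := fun sa =>
  if sa.2 then 0 else
    ((if sa.1.2.1 then p01 else p10) * (if sa.1.2.2 then p01 else p10)) / (2 * (p10 + p01) ^ 2)

noncomputable def geXA (p01 p10 : ℝ) : GEState × Bool → ℝ := fun sa =>
  if sa.1.1 && sa.2 then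
    ((if sa.1.2.1 then p01 else p10) * (if sa.1.2.2 then p01 else p10)) / ((p10 + p01) ^ 2)
  else 0

noncomputable def geXB (p01 p10 : ℝ) : GEState × Bool → ℝ := fun sa =>
  geXA p01 p10 ((!sa.1.1, sa.1.2.2, sa.1.2.1), sa.2)

noncomputable def geXVa (p01 p10 : ℝ) : GEState × Bool → ℝ := fun sa =>
  if sa.1.1 then (if sa.1.2.1 then (if sa.1.2.2 then (if sa.2 then (p01 ^ 2) / ((p10 + p01) ^ 2 * (2 - p10)) else 0) else (if sa.2 then ((1 - p01) * p10 * p01 * (2 - p10) + (1 - p10) * p10 * p01 ^ 2) / ((p10 + p01) ^ 2 * (2 - p10)) else 0)) else (if sa.1.2.2 then (if sa.2 then 0 else (p01 * p10 ^ 2 * (2 - p10) + p10 * (1 - p10) * p01 ^ 2) / ((p10 + p01) ^ 2 * (2 - p10))) else (if sa.2 then ((1 - p01) * p10 ^ 2 * (2 - p10) + p10 ^ 2 * p01 ^ 2) / ((p10 + p01) ^ 2 * (2 - p10)) else 0))) else (if sa.1.2.1 then (if sa.1.2.2 then (if sa.2 then (p01 ^ 2 * (1 - p10)) / ((p10 +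 p01) ^ 2 * (2 - p10)) else 0) else (if sa.2 then 0 else (p01 ^ 2 * p10) / ((p10 + p01) ^ 2 * (2 - p10)))) else (if sa.1.2.2 then (if sa.2 then (p01 * p10 * (1 - p10) * (2 - p10 - p01)) / ((p10 + p01) ^ 2 * (2 - p10)) else 0) else (if sa.2 then 0 else (p01 * p10 ^ 2 * (2 - p10 - p01)) / ((p10 + p01) ^ 2 * (2 - p10)))))

noncomputable def geXVb (p01 p10 : ℝ) : GEState × Bool → ℝ := fun sa =>
  geXVa p01 p10 ((!sa.1.1, sa.1.2.2, sa.1.2.1), sa.2)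


lemma geXO_mem (p01 p10 : ℝ) (h01 : p01 ∈ Set.Ioo (0 : ℝ) 1)
    (h10 : p10 ∈ Set.Ioo (0 : ℝ) 1) : geXO p01 p10 ∈ GEX p01 p10 := by
  obtain ⟨ha, ha'⟩ := h01
  obtain ⟨hb, hb'⟩ := h10
  have hT : (0:ℝ) < p10 + p01 := by linarith
  have h2b : (0:ℝ) < 2 - p10 := by linarith
  have hD : (0:ℝ) < 2 * (p10 + p01) ^ 2 := by positivity
  have k1 : (0:ℝ) ≤ 1 - p01 := by linarith
  have k2 : (0:ℝ) ≤ 1 - p10 := by linarith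
  have k4 : (0:ℝ) ≤ 2 - p10 - p01 := by linarith
  refine ⟨?_, ?_, ?_⟩
  · rintro ⟨⟨m, c1, c2⟩, a⟩
    cases m <;> cases c1 <;> cases c2 <;> cases a <;>
      simp only [geXO, eq_self_iff_true, Bool.false_eq_true, Bool.true_eq_false, ite_true, ite_false, if_true, if_false, Bool.not_true, Bool.not_false, Bool.and_self, Bool.and_true, Bool.and_false, Bool.true_and, Bool.false_and] <;>
      positivity
  · simp only [Fintype.sum_prod_type, Fintype.sum_bool, geXO, eq_self_iff_true, Bool.false_eq_true, Bool.true_eq_false, ite_true, ite_false, if_true, if_false, Bool.not_true, Bool.not_false, Bool.and_self, Bool.and_true, Bool.and_false, Bool.true_and, Bool.false_and,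
      one_mul, mul_zero, zero_mul, mul_one, add_zero, zero_add, zero_div, ← add_div]
    rw [div_eq_one_iff_eq hD.ne']
    ring
  · rintro ⟨m, c1, c2⟩
    cases m <;> cases c1 <;> cases c2 <;>
      (simp only [GEP, chTrans, Fintype.sum_prod_type, Fintype.sum_bool, geXO, eq_self_iff_true, Bool.false_eq_true, Bool.true_eq_false, ite_true, ite_false, if_true, if_false,
        Bool.not_true, Bool.not_false, Bool.and_self, Bool.and_true, Bool.and_false, Bool.true_and, Bool.false_and, one_mul, mul_zero, zero_mul, mul_one, add_zero, zero_add, zero_div, ← mul_div_assoc, ← add_div]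
       all_goals (rw [div_eq_div_iff hD.ne' hD.ne']; ring))

lemma geXA_mem (p01 p10 : ℝ) (h01 : p01 ∈ Set.Ioo (0 : ℝ) 1)
    (h10 : p10 ∈ Set.Ioo (0 : ℝ) 1) : geXA p01 p10 ∈ GEX p01 p10 := by
  obtain ⟨ha, ha'⟩ := h01
  obtain ⟨hb, hb'⟩ := h10
  have hT : (0:ℝ) < p10 + p01 := by linarith
  have h2b : (0:ℝ) < 2 - p10 := by linarith
  have hD : (0:ℝ) < (p10 + p01) ^ 2 := pow_pos hT 2
  have k1 : (0:ℝ) ≤ 1 - p01 := by linarith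
  have k2 : (0:ℝ) ≤ 1 - p10 := by linarith
  have k4 : (0:ℝ) ≤ 2 - p10 - p01 := by linarith
  refine ⟨?_, ?_, ?_⟩
  · rintro ⟨⟨m, c1, c2⟩, a⟩
    cases m <;> cases c1 <;> cases c2 <;> cases a <;>
      simp only [geXA, eq_self_iff_true, Bool.false_eq_true, Bool.true_eq_false, ite_true, ite_false, if_true, if_false, Bool.not_true, Bool.not_false, Bool.and_self, Bool.and_true, Bool.and_false, Bool.true_and, Bool.false_and] <;>
      positivity
  · simp only [Fintype.sum_prod_type, Fintype.sum_bool, geXA, eq_self_iff_true, Bool.false_eq_true, Bool.true_eq_false, ite_true, ite_false, if_true, if_false, Bool.not_true, Bool.not_false, Bool.and_self, Bool.and_true, Bool.and_false, Bool.true_and, Bool.false_and,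
      one_mul, mul_zero, zero_mul, mul_one, add_zero, zero_add, zero_div, ← add_div]
    rw [div_eq_one_iff_eq hD.ne']
    ring
  · rintro ⟨m, c1, c2⟩
    cases m <;> cases c1 <;> cases c2 <;>
      (simp only [GEP, chTrans, Fintype.sum_prod_type, Fintype.sum_bool, geXA, eq_self_iff_true, Bool.false_eq_true, Bool.true_eq_false, ite_true, ite_false, if_true, if_false,
        Bool.not_true, Bool.not_false, Bool.and_self, Bool.and_true, Bool.and_false, Bool.true_and, Bool.false_and, one_mul, mul_zero, zero_mul, mul_one, add_zero, zero_add, zero_div, ← mul_div_assoc, ← add_div]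
       all_goals (rw [div_eq_div_iff hD.ne' hD.ne']; ring))

lemma geXB_mem (p01 p10 : ℝ) (h01 : p01 ∈ Set.Ioo (0 : ℝ) 1)
    (h10 : p10 ∈ Set.Ioo (0 : ℝ) 1) : geXB p01 p10 ∈ GEX p01 p10 := by
  obtain ⟨ha, ha'⟩ := h01
  obtain ⟨hb, hb'⟩ := h10
  have hT : (0:ℝ) < p10 + p01 := by linarith
  have h2b : (0:ℝ) < 2 - p10 := by linarith
  have hD : (0:ℝ) < (p10 + p01) ^ 2 := pow_pos hT 2
  have k1 : (0:ℝ) ≤ 1 - p01 := by linarith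
  have k2 : (0:ℝ) ≤ 1 - p10 := by linarith
  have k4 : (0:ℝ) ≤ 2 - p10 - p01 := by linarith
  refine ⟨?_, ?_, ?_⟩
  · rintro ⟨⟨m, c1, c2⟩, a⟩
    cases m <;> cases c1 <;> cases c2 <;> cases a <;>
      simp only [geXB, geXA, eq_self_iff_true, Bool.false_eq_true, Bool.true_eq_false, ite_true, ite_false, if_true, if_false, Bool.not_true, Bool.not_false, Bool.and_self, Bool.and_true, Bool.and_false, Bool.true_and, Bool.false_and] <;>
      positivity
  · simp only [Fintype.sum_prod_type, Fintype.sum_bool, geXB, geXA, eq_self_iff_true, Bool.false_eq_true, Bool.true_eq_false, ite_true, ite_false, if_true, if_false, Bool.not_true, Bool.not_false, Bool.and_self, Bool.and_true, Bool.and_false, Bool.true_and, Bool.false_and,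
      one_mul, mul_zero, zero_mul, mul_one, add_zero, zero_add, zero_div, ← add_div]
    rw [div_eq_one_iff_eq hD.ne']
    ring
  · rintro ⟨m, c1, c2⟩
    cases m <;> cases c1 <;> cases c2 <;>
      (simp only [GEP, chTrans, Fintype.sum_prod_type, Fintype.sum_bool, geXB, geXA, eq_self_iff_true, Bool.false_eq_true, Bool.true_eq_false, ite_true, ite_false, if_true, if_false,
        Bool.not_true, Bool.not_false, Bool.and_self, Bool.and_true, Bool.and_false, Bool.true_and, Bool.false_and, one_mul, mul_zero, zero_mul, mul_one, add_zero, zero_add, zero_div, ← mul_div_assoc, ← add_div]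
       all_goals (rw [div_eq_div_iff hD.ne' hD.ne']; ring))

lemma geXVa_mem (p01 p10 : ℝ) (h01 : p01 ∈ Set.Ioo (0 : ℝ) 1)
    (h10 : p10 ∈ Set.Ioo (0 : ℝ) 1) : geXVa p01 p10 ∈ GEX p01 p10 := by
  obtain ⟨ha, ha'⟩ := h01
  obtain ⟨hb, hb'⟩ := h10
  have hT : (0:ℝ) < p10 + p01 := by linarith
  have h2b : (0:ℝ) < 2 - p10 := by linarith
  have hD : (0:ℝ) < (p10 + p01) ^ 2 * (2 - p10) := mul_pos (pow_pos hT 2) h2b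
  have k1 : (0:ℝ) ≤ 1 - p01 := by linarith
  have k2 : (0:ℝ) ≤ 1 - p10 := by linarith
  have k4 : (0:ℝ) ≤ 2 - p10 - p01 := by linarith
  refine ⟨?_, ?_, ?_⟩
  · rintro ⟨⟨m, c1, c2⟩, a⟩
    cases m <;> cases c1 <;> cases c2 <;> cases a <;>
      simp only [geXVa, eq_self_iff_true, Bool.false_eq_true, Bool.true_eq_false, ite_true, ite_false, if_true, if_false, Bool.not_true, Bool.not_false, Bool.and_self, Bool.and_true, Bool.and_false, Bool.true_and, Bool.false_and] <;>
      positivity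
  · simp only [Fintype.sum_prod_type, Fintype.sum_bool, geXVa, eq_self_iff_true, Bool.false_eq_true, Bool.true_eq_false, ite_true, ite_false, if_true, if_false, Bool.not_true, Bool.not_false, Bool.and_self, Bool.and_true, Bool.and_false, Bool.true_and, Bool.false_and,
      one_mul, mul_zero, zero_mul, mul_one, add_zero, zero_add, zero_div, ← add_div]
    rw [div_eq_one_iff_eq hD.ne']
    ring
  · rintro ⟨m, c1, c2⟩
    cases m <;> cases c1 <;> cases c2 <;>
      (simp only [GEP, chTrans, Fintype.sum_prod_type, Fintype.sum_bool, geXVa, eq_self_iff_true, Bool.false_eq_true, Bool.true_eq_false, ite_true, ite_false, if_true, if_false,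
        Bool.not_true, Bool.not_false, Bool.and_self, Bool.and_true, Bool.and_false, Bool.true_and, Bool.false_and, one_mul, mul_zero, zero_mul, mul_one, add_zero, zero_add, zero_div, ← mul_div_assoc, ← add_div]
       all_goals (rw [div_eq_div_iff hD.ne' hD.ne']; ring))

lemma geXVb_mem (p01 p10 : ℝ) (h01 : p01 ∈ Set.Ioo (0 : ℝ) 1)
    (h10 : p10 ∈ Set.Ioo (0 : ℝ) 1) : geXVb p01 p10 ∈ GEX p01 p10 := by
  obtain ⟨ha, ha'⟩ := h01
  obtain ⟨hb, hb'⟩ := h10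
  have hT : (0:ℝ) < p10 + p01 := by linarith
  have h2b : (0:ℝ) < 2 - p10 := by linarith
  have hD : (0:ℝ) < (p10 + p01) ^ 2 * (2 - p10) := mul_pos (pow_pos hT 2) h2b
  have k1 : (0:ℝ) ≤ 1 - p01 := by linarith
  have k2 : (0:ℝ) ≤ 1 - p10 := by linarith
  have k4 : (0:ℝ) ≤ 2 - p10 - p01 := by linarith
  refine ⟨?_, ?_, ?_⟩
  · rintro ⟨⟨m, c1, c2⟩, a⟩
    cases m <;> cases c1 <;> cases c2 <;> cases a <;>
      simp only [geXVb, geXVa, eq_self_iff_true, Bool.false_eq_true, Bool.true_eq_false, ite_true, ite_false, if_true, if_false, Bool.not_true, Bool.not_false, Bool.and_self, Bool.and_true, Bool.and_false, Bool.true_and, Bool.false_and] <;>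
      positivity
  · simp only [Fintype.sum_prod_type, Fintype.sum_bool, geXVb, geXVa, eq_self_iff_true, Bool.false_eq_true, Bool.true_eq_false, ite_true, ite_false, if_true, if_false, Bool.not_true, Bool.not_false, Bool.and_self, Bool.and_true, Bool.and_false, Bool.true_and, Bool.false_and,
      one_mul, mul_zero, zero_mul, mul_one, add_zero, zero_add, zero_div, ← add_div]
    rw [div_eq_one_iff_eq hD.ne']
    ring
  · rintro ⟨m, c1, c2⟩
    cases m <;> cases c1 <;> cases c2 <;>
      (simp only [GEP, chTrans, Fintype.sum_prod_type, Fintype.sum_bool, geXVb, geXVa, eq_self_iff_true, Bool.false_eq_true, Bool.true_eq_false, ite_true, ite_false, if_true, if_false,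
        Bool.not_true, Bool.not_false, Bool.and_self, Bool.and_true, Bool.and_false, Bool.true_and, Bool.false_and, one_mul, mul_zero, zero_mul, mul_one, add_zero, zero_add, zero_div, ← mul_div_assoc, ← add_div]
       all_goals (rw [div_eq_div_iff hD.ne' hD.ne']; ring))

noncomputable def geV1 (p01 p10 : ℝ) : ℝ :=
  p01 ^ 2 / ((p10 + p01) ^ 2 * (2 - p10)) + ((1 - p01) * p10 * p01 * (2 - p10) + (1 - p10) * p10 * p01 ^ 2) / ((p10 + p01) ^ 2 * (2 - p10))

noncomputable def geV2 (p01 p10 : ℝ) : ℝ :=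
  p01 ^ 2 * (1 - p10) / ((p10 + p01) ^ 2 * (2 - p10)) + p01 * p10 * (1 - p10) * (2 - p10 - p01) / ((p10 + p01) ^ 2 * (2 - p10))

lemma geEpp (p01 p10 : ℝ) (hT' : (p10 + p01) ≠ 0) :
    p01 * p01 / ((p10 + p01) ^ 2) + p01 * p10 / ((p10 + p01) ^ 2) = p01 / (p10 + p01) := by
  field_simp
  ring

lemma geFacts (p01 p10 : ℝ) (h01 : p01 ∈ Set.Ioo (0 : ℝ) 1)
    (h10 : p10 ∈ Set.Ioo (0 : ℝ) 1) (hsum : p01 + p10 ≤ 1) :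
    (1 - p10) * (p10 + (p10 + p01) * (1 - p10)) * geV1 p01 p10 + p01 * geV2 p01 p10 =
      (1 - p10) * (p10 + (p10 + p01) * (1 - p10)) * (p01 / (p10 + p01)) ∧
    geV1 p01 p10 + geV2 p01 p10 = 1 - p10 ^ 2 / (p10 + p01) ^ 2 - p10 * p01 / (p01 + p10) ∧
    0 < geV2 p01 p10 ∧ geV2 p01 p10 < geV1 p01 p10 := by
  obtain ⟨ha, ha'⟩ := h01
  obtain ⟨hb, hb'⟩ := h10
  have hT : (0:ℝ) < p10 + p01 := by linarith
  have hT' : (p10 + p01) ≠ 0 := ne_of_gt hT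
  have hT2 : (0:ℝ) < p01 + p10 := by linarith
  have hT2' : (p01 + p10) ≠ 0 := ne_of_gt hT2
  have h2b : (0:ℝ) < 2 - p10 := by linarith
  have h2b' : (2 - p10) ≠ 0 := ne_of_gt h2b
  have k2 : (0:ℝ) < 1 - p10 := by linarith
  have k4 : (0:ℝ) ≤ 2 - p10 - p01 := by linarith
  refine ⟨?_, ?_, ?_, ?_⟩
  · simp only [geV1, geV2]
    field_simp
    ring
  · simp only [geV1, geV2]
    field_simp
    ring
  · simp only [geV2]
    positivity
  · rw [← sub_pos]
    have e : geV1 p01 p10 - geV2 p01 p10 =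
        (p01 * p10 * (p10 * (2 - p10) + p01 * (1 - p10))) / ((p10 + p01) ^ 2 * (2 - p10)) := by
      simp only [geV1, geV2]
      field_simp
      ring
    rw [e]
    positivity
/-- For `p₀₁, p₁₀ ∈ (0,1)` with `p₀₁ + p₁₀ ≤ 1` and `p₀₁ ≥ (1-p₁₀)²/(2-p₁₀)`, the rate
region `Λ_s(p₀₁, p₁₀)` is the set of nonnegative pairs `(r₁, r₂)` satisfying the three
stated inequalities, where `h₃ = (1-p₁₀)(p₁₀ + (p₁₀+p₀₁)(1-p₁₀))`. -/
theorem rate_region_eq_nonsymmetric_ge (p01 p10 : ℝ)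
    (h01 : p01 ∈ Set.Ioo (0 : ℝ) 1) (h10 : p10 ∈ Set.Ioo (0 : ℝ) 1)
    (hsum : p01 + p10 ≤ 1) (hge : (1 - p10) ^ 2 / (2 - p10) ≤ p01) :
    GERateRegion p01 p10 =
      {r : ℝ × ℝ | 0 ≤ r.1 ∧ 0 ≤ r.2 ∧
        p01 * r.1 + (1 - p10) * (p10 + (p10 + p01) * (1 - p10)) * r.2 ≤
          (1 - p10) * (p10 + (p10 + p01) * (1 - p10)) * (p01 / (p10 + p01)) ∧
        r.1 + r.2 ≤ 1 - p10 ^ 2 / (p10 + p01) ^ 2 - p10 * p01 / (p01 + p10) ∧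
        (1 - p10) * (p10 + (p10 + p01) * (1 - p10)) * r.1 + p01 * r.2 ≤
          (1 - p10) * (p10 + (p10 + p01) * (1 - p10)) * (p01 / (p10 + p01))} := by
  obtain ⟨ha, ha'⟩ := h01
  obtain ⟨hb, hb'⟩ := h10
  have hT : (0:ℝ) < p10 + p01 := by linarith
  have hT' : (p10 + p01) ≠ 0 := ne_of_gt hT
  have h2b : (0:ℝ) < 2 - p10 := by linarith
  have h2b' : (2 - p10) ≠ 0 := ne_of_gt h2b
  have k2 : (0:ℝ) < 1 - p10 := by linarith
  have k1 : (0:ℝ) ≤ 1 - p01 := by linarith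
  have k6 : (0:ℝ) ≤ 1 - p01 - p10 := by linarith
  have k7 : (0:ℝ) < 2 - p01 - p10 := by linarith
  have kQ : (0:ℝ) ≤ 2 - 2 * p10 + p10 ^ 2 := by nlinarith [sq_nonneg (1 - p10)]
  have kH : (0:ℝ) ≤ p01 * (2 - p10) - (1 - p10) ^ 2 := by
    have := (div_le_iff₀ h2b).mp hge; linarith
  apply Set.Subset.antisymm
  · rintro ⟨r1, r2⟩ ⟨x, hx, heq⟩
    obtain ⟨hnn, hs, hbal⟩ := hx
    rw [Prod.mk.injEq] at heq
    obtain ⟨hq1, hq2⟩ := heq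
    subst hq1
    subst hq2
    have e0 := hbal (false, false, false)
    have e1 := hbal (false, false, true)
    have e2 := hbal (false, true, false)
    have e3 := hbal (false, true, true)
    have e4 := hbal (true, false, false)
    have e5 := hbal (true, false, true)
    have e6 := hbal (true, true, false)
    have e7 := hbal (true, true, true)
    simp only [GEP, chTrans, Fintype.sum_prod_type, Fintype.sum_bool, Bool.not_true,
      Bool.not_false, eq_self_iff_true, Bool.false_eq_true, Bool.true_eq_false,
      ite_true, ite_false, if_true, if_false, one_mul, mul_zero, zero_mul,
      add_zero, zero_add] at e0 e1 e2 e3 e4 e5 e6 e7 hs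
    have hx00 : (0:ℝ) ≤ x ((false, false, false), false) := hnn _
    have hx01 : (0:ℝ) ≤ x ((false, false, false), true) := hnn _
    have hx10 : (0:ℝ) ≤ x ((false, false, true), false) := hnn _
    have hx11 : (0:ℝ) ≤ x ((false, false, true), true) := hnn _
    have hx20 : (0:ℝ) ≤ x ((false, true, false), false) := hnn _
    have hx21 : (0:ℝ) ≤ x ((false, true, false), true) := hnn _
    have hx30 : (0:ℝ) ≤ x ((false, true, true), false) := hnn _
    have hx31 : (0:ℝ) ≤ x ((false, true, true), true) := hnn _
    have hx40 : (0:ℝ) ≤ x ((true, false, false), false) := hnn _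
    have hx41 : (0:ℝ) ≤ x ((true, false, false), true) := hnn _
    have hx50 : (0:ℝ) ≤ x ((true, false, true), false) := hnn _
    have hx51 : (0:ℝ) ≤ x ((true, false, true), true) := hnn _
    have hx60 : (0:ℝ) ≤ x ((true, true, false), false) := hnn _
    have hx61 : (0:ℝ) ≤ x ((true, true, false), true) := hnn _
    have hx70 : (0:ℝ) ≤ x ((true, true, true), false) := hnn _
    have hx71 : (0:ℝ) ≤ x ((true, true, true), true) := hnn _
    simp only [Set.mem_setOf_eq, GErate1, GErate2]
    have hDpos1 : (0:ℝ) < (2 - p10) * (p10 + p01) ^ 2 := mul_pos h2b (pow_pos hT 2)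
    have hDpos2 : (0:ℝ) < (2 - p01 - p10) * (p10 + p01) ^ 2 := mul_pos k7 (pow_pos hT 2)
    refine ⟨add_nonneg (hnn _) (hnn _), add_nonneg (hnn _) (hnn _), ?_, ?_, ?_⟩
    · have key : (p01 * (x ((true, true, true), true) + x ((true, true, false), true)) + (1 - p10) * (p10 + (p10 + p01) * (1 - p10)) * (x ((false, true, true), true) + x ((false, false, true), true))) * ((2 - p10) * (p10 + p01) ^ 2) + (p01 * (p10 + p01) ^ 2 * (2 - p10) * (1 - p01 - p10) * (p10 * (2 - p10) + p01 * (1 - p10)) * x ((false, false, false), false) + (p10 + p01) ^ 2 * (2 - p10) * (p01 * (1 - p01 - p10) * (2 - 2 * p10 + p10 ^ 2) + p01 * (1 - 2 * p10) ^ 2 + p10 ^ 3 * (1 - p01 - p10) + 4 * p10 * (1 - p10) ^ 2) * x ((false, false, true), false) + (1 - p10) * (p10 + p01) ^ 2 * (2 - p10) * (1 + p10 * (1 - p01 - p10)) * x ((false, true, true), false) + p01 * (p10 + p01) ^ 2 * (2 - p10) * (1 - p01 - p10) * (p10 * (2 - p10) + p01 * (1 - p10)) * x ((true, false, false), true) +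 (p10 + p01) ^ 2 * (2 - p10) * (1 - p01 - p10) * (p10 * (1 - p10) * (2 - p10) + p01 * (2 - 2 * p10 + p10 ^ 2)) * x ((true, false, true), true) + p01 * (p10 + p01) ^ 2 * (2 - p10) * x ((true, true, false), false) + (p10 + p01) ^ 2 * (2 - p10) * (p01 * (2 - p10) - (1 - p10) ^ 2) * x ((true, true, true), false)) = (4 : ℝ)*p01*p10^2 - (8 : ℝ)*p01*p10^3 + (5 : ℝ)*p01*p10^4 - p01*p10^5 + (6 : ℝ)*p01^2*p10 - (13 : ℝ)*p01^2*p10^2 + (9 : ℝ)*p01^2*p10^3 - (2 : ℝ)*p01^2*p10^4 + (2 : ℝ)*p01^3 - (5 : ℝ)*p01^3*p10 + (4 : ℝ)*p01^3*p10^2 - p01^3*p10^3 := by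
        linear_combination (-(-(4 : ℝ)*p10^2 + (8 : ℝ)*p10^3 - (5 : ℝ)*p10^4 + p10^5 - (6 : ℝ)*p01*p10 + (13 : ℝ)*p01*p10^2 - (9 : ℝ)*p01*p10^3 + (2 : ℝ)*p01*p10^4 - (2 : ℝ)*p01^2 + (5 : ℝ)*p01^2*p10 - (4 : ℝ)*p01^2*p10^2 + p01^2*p10^3)) * e1 + (-(-(4 : ℝ)*p10^2 + (8 : ℝ)*p10^3 - (5 : ℝ)*p10^4 + p10^5 - (6 : ℝ)*p01*p10 + (13 : ℝ)*p01*p10^2 - (9 : ℝ)*p01*p10^3 + (2 : ℝ)*p01*p10^4 - (2 : ℝ)*p01^2 + (5 : ℝ)*p01^2*p10 - (4 : ℝ)*p01^2*p10^2 + p01^2*p10^3)) * e3 + (-(-(4 : ℝ)*p10^2 + (12 : ℝ)*p10^3 - (13 : ℝ)*p10^4 + (6 : ℝ)*p10^5 - p10^6 - (6 : ℝ)*p01*p10 + (23 : ℝ)*p01*p10^2 - (30 : ℝ)*p01*p10^3 + (16 : ℝ)*p01*p10^4 - (3 : ℝ)*p01*p10^5 - (2 : ℝ)*p01^2 + (13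 : ℝ)*p01^2*p10 - (22 : ℝ)*p01^2*p10^2 + (14 : ℝ)*p01^2*p10^3 - (3 : ℝ)*p01^2*p10^4 + (2 : ℝ)*p01^3 - (5 : ℝ)*p01^3*p10 + (4 : ℝ)*p01^3*p10^2 - p01^3*p10^3)) * e5 + (-(-(2 : ℝ)*p01*p10^2 + p01*p10^3 - (4 : ℝ)*p01^2*p10 + (2 : ℝ)*p01^2*p10^2 - (2 : ℝ)*p01^3 + p01^3*p10)) * e6 + (-(-(2 : ℝ)*p10^2 + (7 : ℝ)*p10^3 - (9 : ℝ)*p10^4 + (5 : ℝ)*p10^5 - p10^6 - (2 : ℝ)*p01*p10 + (9 : ℝ)*p01*p10^2 - (18 : ℝ)*p01*p10^3 + (13 : ℝ)*p01*p10^4 - (3 : ℝ)*p01*p10^5 - (10 : ℝ)*p01^2*p10^2 + (11 : ℝ)*p01^2*p10^3 - (3 : ℝ)*p01^2*p10^4 - (2 : ℝ)*p01^3 - p01^3*p10 + (3 : ℝ)*p01^3*p10^2 - p01^3*p10^3)) * e7 + ((4 : ℝ)*p01*p10^2 - (8 : ℝ)*p01*p10^3 + (5 : ℝ)*p01*p10^4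 - p01*p10^5 + (6 : ℝ)*p01^2*p10 - (13 : ℝ)*p01^2*p10^2 + (9 : ℝ)*p01^2*p10^3 - (2 : ℝ)*p01^2*p10^4 + (2 : ℝ)*p01^3 - (5 : ℝ)*p01^3*p10 + (4 : ℝ)*p01^3*p10^2 - p01^3*p10^3) * hs
      have hmu : (0:ℝ) ≤ p01 * (p10 + p01) ^ 2 * (2 - p10) * (1 - p01 - p10) * (p10 * (2 - p10) + p01 * (1 - p10)) * x ((false, false, false), false) + (p10 + p01) ^ 2 * (2 - p10) * (p01 * (1 - p01 - p10) * (2 - 2 * p10 + p10 ^ 2) + p01 * (1 - 2 * p10) ^ 2 + p10 ^ 3 * (1 - p01 - p10) + 4 * p10 * (1 - p10) ^ 2) * x ((false, false, true), false) + (1 - p10) * (p10 + p01) ^ 2 * (2 - p10) * (1 + p10 * (1 - p01 - p10)) * x ((false, true, true), false) + p01 * (p10 + p01) ^ 2 * (2 - p10) * (1 - p01 - p10) * (p10 * (2 - p10) + p01 * (1 - p10)) * x ((true, false, false), true) + (p10 + p01) ^ 2 * (2 - p10) * (1 - p01 - p10) * (p10 * (1 - p10) * (2 - p10) + p01 * (2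 - 2 * p10 + p10 ^ 2)) * x ((true, false, true), true) + p01 * (p10 + p01) ^ 2 * (2 - p10) * x ((true, true, false), false) + (p10 + p01) ^ 2 * (2 - p10) * (p01 * (2 - p10) - (1 - p10) ^ 2) * x ((true, true, true), false) := by positivity
      rw [← sub_nonneg]
      have eg : (1 - p10) * (p10 + (p10 + p01) * (1 - p10)) * (p01 / (p10 + p01)) = ((4 : ℝ)*p01*p10^2 - (8 : ℝ)*p01*p10^3 + (5 : ℝ)*p01*p10^4 - p01*p10^5 + (6 : ℝ)*p01^2*p10 - (13 : ℝ)*p01^2*p10^2 + (9 : ℝ)*p01^2*p10^3 - (2 : ℝ)*p01^2*p10^4 + (2 : ℝ)*p01^3 - (5 : ℝ)*p01^3*p10 + (4 : ℝ)*p01^3*p10^2 - p01^3*p10^3) / ((2 - p10) * (p10 + p01) ^ 2) := by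
        field_simp
        ring
      rw [eg, div_sub' (ne_of_gt hDpos1)]
      apply div_nonneg _ (le_of_lt hDpos1)
      linarith [key, hmu]
    · have key : (x ((true, true, true), true) + x ((true, true, false), true) + (x ((false, true, true), true) + x ((false, false, true), true))) * ((2 - p01 - p10) * (p10 + p01) ^ 2) + ((p10 + p01) ^ 2 * (2 - p01 - p10) ^ 2 * x ((false, false, true), false) + (p10 + p01) ^ 2 * (2 - p01 - p10) * (1 - p01 - p10) * x ((false, true, false), true) + (p10 + p01) ^ 2 * (2 - p01 - p10) * x ((false, true, true), false) + (p10 + p01) ^ 2 * (2 - p01 - p10) * (1 - p01 - p10) * x ((true, false, true), true) + (p10 + p01) ^ 2 * (2 - p01 - p10) ^ 2 * x ((true, true, false), false) + (p10 + p01) ^ 2 * (2 - p01 - p10) * x ((true, true, true), false)) = (4 : ℝ)*p01*p10 - (4 : ℝ)*p01*p10^2 + p01*p10^3 + (2 : ℝ)*p01^2 - (5 : ℝ)*p01^2*p10 + (2 : ℝ)*p01^2*p10^2 - p01^3 + p01^3*p10 := by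
        linear_combination (-(-(2 : ℝ)*p10 + p10^2 - p01 + p01*p10^2 - p01^2 + (2 : ℝ)*p01^2*p10 + p01^3)) * e1 + (-(-(2 : ℝ)*p10 + (3 : ℝ)*p10^2 - p10^3 - p01 + (4 : ℝ)*p01*p10 - (2 : ℝ)*p01*p10^2 + p01^2 - p01^2*p10)) * e2 + (-(-(3 : ℝ)*p10 + (3 : ℝ)*p10^2 - p10^3 - p01 + (2 : ℝ)*p01*p10 - p01*p10^2 - p01^2 + p01^2*p10 + p01^3)) * e3 + (-(-(2 : ℝ)*p10 + (3 : ℝ)*p10^2 - p10^3 - p01 + (4 : ℝ)*p01*p10 - (2 : ℝ)*p01*p10^2 + p01^2 - p01^2*p10)) * e5 + (-(-(2 : ℝ)*p10 + p10^2 - p01 + p01*p10^2 - p01^2 + (2 : ℝ)*p01^2*p10 + p01^3)) * e6 + (-(-(3 : ℝ)*p10 + (3 : ℝ)*p10^2 - p10^3 - p01 + (2 : ℝ)*p01*p10 - p01*p10^2 - p01^2 + p01^2*p10 + p01^3)) * e7 + ((4 : ℝ)*p01*p10 - (4 : ℝ)*p01*p10^2 + p01*p10^3 + (2 : ℝ)*p01^2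 - (5 : ℝ)*p01^2*p10 + (2 : ℝ)*p01^2*p10^2 - p01^3 + p01^3*p10) * hs
      have hmu : (0:ℝ) ≤ (p10 + p01) ^ 2 * (2 - p01 - p10) ^ 2 * x ((false, false, true), false) + (p10 + p01) ^ 2 * (2 - p01 - p10) * (1 - p01 - p10) * x ((false, true, false), true) + (p10 + p01) ^ 2 * (2 - p01 - p10) * x ((false, true, true), false) + (p10 + p01) ^ 2 * (2 - p01 - p10) * (1 - p01 - p10) * x ((true, false, true), true) + (p10 + p01) ^ 2 * (2 - p01 - p10) ^ 2 * x ((true, true, false), false) + (p10 + p01) ^ 2 * (2 - p01 - p10) * x ((true, true, true), false) := by positivity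
      rw [← sub_nonneg]
      have eg : 1 - p10 ^ 2 / (p10 + p01) ^ 2 - p10 * p01 / (p01 + p10) = ((4 : ℝ)*p01*p10 - (4 : ℝ)*p01*p10^2 + p01*p10^3 + (2 : ℝ)*p01^2 - (5 : ℝ)*p01^2*p10 + (2 : ℝ)*p01^2*p10^2 - p01^3 + p01^3*p10) / ((2 - p01 - p10) * (p10 + p01) ^ 2) := by
        field_simp
        ring
      rw [eg, div_sub' (ne_of_gt hDpos2)]
      apply div_nonneg _ (le_of_lt hDpos2)
      linarith [key, hmu]
    · have key : ((1 - p10) * (p10 + (p10 + p01) * (1 - p10)) * (x ((true, true, true), true) + x ((true, true, false), true)) + p01 * (x ((false, true, true), true) + x ((false, false, true), true))) * ((2 - p10) * (p10 + p01) ^ 2) + (p01 * (p10 + p01) ^ 2 * (2 - p10) * (1 - p01 - p10) * (p10 * (2 - p10) + p01 * (1 - p10)) * x ((false, false, false), true) + p01 * (p10 + p01) ^ 2 * (2 - p10) * x ((false, false, true), false) + (p10 + p01) ^ 2 * (2 - p10) * (1 - p01 - p10) * (p10 * (1 - p10) * (2 - p10) + p01 * (2 - 2 * p10 + p10 ^ 2))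 * x ((false, true, false), true) + (p10 + p01) ^ 2 * (2 - p10) * (p01 * (2 - p10) - (1 - p10) ^ 2) * x ((false, true, true), false) + p01 * (p10 + p01) ^ 2 * (2 - p10) * (1 - p01 - p10) * (p10 * (2 - p10) + p01 * (1 - p10)) * x ((true, false, false), false) + (p10 + p01) ^ 2 * (2 - p10) * (p01 * (1 - p01 - p10) * (2 - 2 * p10 + p10 ^ 2) + p01 * (1 - 2 * p10) ^ 2 + p10 ^ 3 * (1 - p01 - p10) + 4 * p10 * (1 - p10) ^ 2) * x ((true, true, false), false) + (1 - p10) * (p10 + p01) ^ 2 * (2 - p10) * (1 + p10 * (1 - p01 - p10)) * x ((true, true, true), false)) = (4 : ℝ)*p01*p10^2 - (8 : ℝ)*p01*p10^3 + (5 : ℝ)*p01*p10^4 - p01*p10^5 + (6 : ℝ)*p01^2*p10 - (13 : ℝ)*p01^2*p10^2 + (9 : ℝ)*p01^2*p10^3 - (2 : ℝ)*p01^2*p10^4 + (2 : ℝ)*p01^3 - (5 : ℝ)*p01^3*p10 + (4 : ℝ)*p01^3*p10^2 - p01^3*p10^3 := by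
        linear_combination (-(-(2 : ℝ)*p01*p10^2 + p01*p10^3 - (4 : ℝ)*p01^2*p10 + (2 : ℝ)*p01^2*p10^2 - (2 : ℝ)*p01^3 + p01^3*p10)) * e1 + (-(-(4 : ℝ)*p10^2 + (12 : ℝ)*p10^3 - (13 : ℝ)*p10^4 + (6 : ℝ)*p10^5 - p10^6 - (6 : ℝ)*p01*p10 + (23 : ℝ)*p01*p10^2 - (30 : ℝ)*p01*p10^3 + (16 : ℝ)*p01*p10^4 - (3 : ℝ)*p01*p10^5 - (2 : ℝ)*p01^2 + (13 : ℝ)*p01^2*p10 - (22 : ℝ)*p01^2*p10^2 + (14 : ℝ)*p01^2*p10^3 - (3 : ℝ)*p01^2*p10^4 + (2 : ℝ)*p01^3 - (5 : ℝ)*p01^3*p10 + (4 : ℝ)*p01^3*p10^2 - p01^3*p10^3)) * e2 + (-(-(2 : ℝ)*p10^2 + (7 : ℝ)*p10^3 - (9 : ℝ)*p10^4 + (5 : ℝ)*p10^5 - p10^6 - (2 : ℝ)*p01*p10 + (9 : ℝ)*p01*p10^2 - (18 : ℝ)*p01*p10^3 + (13 : ℝ)*p01*p10^4 - (3 : ℝ)*p01*p10^5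 - (10 : ℝ)*p01^2*p10^2 + (11 : ℝ)*p01^2*p10^3 - (3 : ℝ)*p01^2*p10^4 - (2 : ℝ)*p01^3 - p01^3*p10 + (3 : ℝ)*p01^3*p10^2 - p01^3*p10^3)) * e3 + (-(-(4 : ℝ)*p10^2 + (8 : ℝ)*p10^3 - (5 : ℝ)*p10^4 + p10^5 - (6 : ℝ)*p01*p10 + (13 : ℝ)*p01*p10^2 - (9 : ℝ)*p01*p10^3 + (2 : ℝ)*p01*p10^4 - (2 : ℝ)*p01^2 + (5 : ℝ)*p01^2*p10 - (4 : ℝ)*p01^2*p10^2 + p01^2*p10^3)) * e6 + (-(-(4 : ℝ)*p10^2 + (8 : ℝ)*p10^3 - (5 : ℝ)*p10^4 + p10^5 - (6 : ℝ)*p01*p10 + (13 : ℝ)*p01*p10^2 - (9 : ℝ)*p01*p10^3 + (2 : ℝ)*p01*p10^4 - (2 : ℝ)*p01^2 + (5 : ℝ)*p01^2*p10 - (4 : ℝ)*p01^2*p10^2 + p01^2*p10^3)) * e7 + ((4 : ℝ)*p01*p10^2 - (8 : ℝ)*p01*p10^3 + (5 : ℝ)*p01*p10^4 - p01*p10^5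 + (6 : ℝ)*p01^2*p10 - (13 : ℝ)*p01^2*p10^2 + (9 : ℝ)*p01^2*p10^3 - (2 : ℝ)*p01^2*p10^4 + (2 : ℝ)*p01^3 - (5 : ℝ)*p01^3*p10 + (4 : ℝ)*p01^3*p10^2 - p01^3*p10^3) * hs
      have hmu : (0:ℝ) ≤ p01 * (p10 + p01) ^ 2 * (2 - p10) * (1 - p01 - p10) * (p10 * (2 - p10) + p01 * (1 - p10)) * x ((false, false, false), true) + p01 * (p10 + p01) ^ 2 * (2 - p10) * x ((false, false, true), false) + (p10 + p01) ^ 2 * (2 - p10) * (1 - p01 - p10) * (p10 * (1 - p10) * (2 - p10) + p01 * (2 - 2 * p10 + p10 ^ 2)) * x ((false, true, false), true) + (p10 + p01) ^ 2 * (2 - p10) * (p01 * (2 - p10) - (1 - p10) ^ 2) * x ((false, true, true), false) + p01 * (p10 + p01) ^ 2 * (2 - p10) * (1 - p01 - p10) * (p10 * (2 - p10) + p01 * (1 - p10)) * x ((true, false, false), false) + (p10 + p01) ^ 2 * (2 - p10) * (p01 * (1 - p01 - p10) * (2 - 2 * p10 + p10 ^ 2) + p01 * (1 - 2 * p10) ^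 2 + p10 ^ 3 * (1 - p01 - p10) + 4 * p10 * (1 - p10) ^ 2) * x ((true, true, false), false) + (1 - p10) * (p10 + p01) ^ 2 * (2 - p10) * (1 + p10 * (1 - p01 - p10)) * x ((true, true, true), false) := by positivity
      rw [← sub_nonneg]
      have eg : (1 - p10) * (p10 + (p10 + p01) * (1 - p10)) * (p01 / (p10 + p01)) = ((4 : ℝ)*p01*p10^2 - (8 : ℝ)*p01*p10^3 + (5 : ℝ)*p01*p10^4 - p01*p10^5 + (6 : ℝ)*p01^2*p10 - (13 : ℝ)*p01^2*p10^2 + (9 : ℝ)*p01^2*p10^3 - (2 : ℝ)*p01^2*p10^4 + (2 : ℝ)*p01^3 - (5 : ℝ)*p01^3*p10 + (4 : ℝ)*p01^3*p10^2 - p01^3*p10^3) / ((2 - p10) * (p10 + p01) ^ 2) := by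
        field_simp
        ring
      rw [eg, div_sub' (ne_of_gt hDpos1)]
      apply div_nonneg _ (le_of_lt hDpos1)
      linarith [key, hmu]
  · rintro ⟨r1, r2⟩ hmem
    obtain ⟨h1, h2, hA, hB, hC⟩ := hmem
    simp only at h1 h2 hA hB hC
    have hOm := geXO_mem p01 p10 ⟨ha, ha'⟩ ⟨hb, hb'⟩
    have hAm := geXA_mem p01 p10 ⟨ha, ha'⟩ ⟨hb, hb'⟩
    have hBm := geXB_mem p01 p10 ⟨ha, ha'⟩ ⟨hb, hb'⟩
    have hVam := geXVa_mem p01 p10 ⟨ha, ha'⟩ ⟨hb, hb'⟩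
    have hVbm := geXVb_mem p01 p10 ⟨ha, ha'⟩ ⟨hb, hb'⟩
    obtain ⟨fI3, fI2, fV2, fVV⟩ := geFacts p01 p10 ⟨ha, ha'⟩ ⟨hb, hb'⟩ hsum
    have hpi1 : (0:ℝ) < p01 / (p10 + p01) := div_pos ha hT
    have hh3 : (0:ℝ) < (1 - p10) * (p10 + (p10 + p01) * (1 - p10)) := by positivity
    have hepp := geEpp p01 p10 hT'
    rcases le_or_gt (r2 * geV1 p01 p10) (r1 * geV2 p01 p10) with hcase | hcase1
    · obtain ⟨al, be, ga, hal, hbe, hga, hsum1, hr1, hr2⟩ :=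
        geBarySide ((1 - p10) * (p10 + (p10 + p01) * (1 - p10))) p01 (p01 / (p10 + p01))
          (geV1 p01 p10) (geV2 p01 p10) r1 r2 hh3 hpi1 fV2 fI3 h2 hcase hC
      refine ⟨fun sa => ga * geXO p01 p10 sa + al * geXA p01 p10 sa + be * geXVa p01 p10 sa,
        geAux_comb hOm hAm hVam hga hal hbe hsum1, ?_⟩
      simp only [geV1, geV2] at hr1 hr2
      have R1 : GErate1 (fun sa => ga * geXO p01 p10 sa + al * geXA p01 p10 sa +
          be * geXVa p01 p10 sa) = r1 := by
        simp only [GErate1, geXO, geXA, geXVa, Bool.and_self, Bool.and_true, Bool.and_false,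
          eq_self_iff_true, Bool.false_eq_true, Bool.true_eq_false, ite_true, ite_false,
          mul_zero, add_zero, zero_add]
        linear_combination hr1 + al * hepp
      have R2 : GErate2 (fun sa => ga * geXO p01 p10 sa + al * geXA p01 p10 sa +
          be * geXVa p01 p10 sa) = r2 := by
        simp only [GErate2, geXO, geXA, geXVa, Bool.and_self, Bool.and_true, Bool.and_false,
          eq_self_iff_true, Bool.false_eq_true, Bool.true_eq_false, ite_true, ite_false,
          mul_zero, add_zero, zero_add]
        linear_combination hr2
      rw [Prod.mk.injEq]
      exact ⟨R1.symm, R2.symm⟩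
    rcases le_or_gt (r1 * geV1 p01 p10) (r2 * geV2 p01 p10) with hcase | hcase2
    · obtain ⟨al, be, ga, hal, hbe, hga, hsum1, hr1, hr2⟩ :=
        geBarySide ((1 - p10) * (p10 + (p10 + p01) * (1 - p10))) p01 (p01 / (p10 + p01))
          (geV1 p01 p10) (geV2 p01 p10) r2 r1 hh3 hpi1 fV2 fI3 h1 hcase (by linarith)
      refine ⟨fun sa => ga * geXO p01 p10 sa + al * geXB p01 p10 sa + be * geXVb p01 p10 sa,
        geAux_comb hOm hBm hVbm hga hal hbe hsum1, ?_⟩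
      simp only [geV1, geV2] at hr1 hr2
      have R1 : GErate1 (fun sa => ga * geXO p01 p10 sa + al * geXB p01 p10 sa +
          be * geXVb p01 p10 sa) = r1 := by
        simp only [GErate1, geXO, geXB, geXA, geXVb, geXVa, Bool.not_true, Bool.not_false,
          Bool.and_self, Bool.and_true, Bool.and_false, eq_self_iff_true, Bool.false_eq_true,
          Bool.true_eq_false, ite_true, ite_false, mul_zero, add_zero, zero_add]
        linear_combination hr2
      have R2 : GErate2 (fun sa => ga * geXO p01 p10 sa + al * geXB p01 p10 sa +
          be * geXVb p01 p10 sa) = r2 := by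
        simp only [GErate2, geXO, geXB, geXA, geXVb, geXVa, Bool.not_true, Bool.not_false,
          Bool.and_self, Bool.and_true, Bool.and_false, eq_self_iff_true, Bool.false_eq_true,
          Bool.true_eq_false, ite_true, ite_false, mul_zero, add_zero, zero_add]
        linear_combination hr1 + al * hepp
      rw [Prod.mk.injEq]
      exact ⟨R1.symm, R2.symm⟩
    · obtain ⟨al, be, ga, hal, hbe, hga, hsum1, hr1, hr2⟩ :=
        geBaryMid (1 - p10 ^ 2 / (p10 + p01) ^ 2 - p10 * p01 / (p01 + p10))
          (geV1 p01 p10) (geV2 p01 p10) r1 r2 fV2 fVV fI2 hcase1.le hcase2.le hB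
      refine ⟨fun sa => ga * geXO p01 p10 sa + al * geXVa p01 p10 sa + be * geXVb p01 p10 sa,
        geAux_comb hOm hVam hVbm hga hal hbe hsum1, ?_⟩
      simp only [geV1, geV2] at hr1 hr2
      have R1 : GErate1 (fun sa => ga * geXO p01 p10 sa + al * geXVa p01 p10 sa +
          be * geXVb p01 p10 sa) = r1 := by
        simp only [GErate1, geXO, geXVa, geXVb, Bool.not_true, Bool.not_false,
          eq_self_iff_true, Bool.false_eq_true, Bool.true_eq_false, ite_true, ite_false,
          mul_zero, add_zero, zero_add]
        linear_combination hr1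
      have R2 : GErate2 (fun sa => ga * geXO p01 p10 sa + al * geXVa p01 p10 sa +
          be * geXVb p01 p10 sa) = r2 := by
        simp only [GErate2, geXO, geXVa, geXVb, Bool.not_true, Bool.not_false,
          eq_self_iff_true, Bool.false_eq_true, Bool.true_eq_false, ite_true, ite_false,
          mul_zero, add_zero, zero_add]
        linear_combination hr2
      rw [Prod.mk.injEq]
      exact ⟨R1.symm, R2.symm⟩
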